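/- (Assembled error bound for rapid prediction.) Let H be a real inner product space, Φ : ℝ^d → H a feature map with kernel k(x, y) = ⟨Φ(x), Φ(y)⟩, let s_1^G, …, s_N^G ∈ ℝ^d be grid points with V = span{Φ(s_1^G), …, Φ(s_N^G)} (a complete subspace) and orthogonal projection P_V, and define the approximate kernel k_approx(x, s) = ⟨Φ(x), P_V Φ(s)⟩. Then for any prediction location s ∈ ℝ^d, observation locations s_1^O, …, s_n^O ∈ ℝ^d and coefficients c ∈ ℝ^n, the rapid prediction error satisfies |ĝ_approx(s) − ĝ(s)| = |Σ_{i=1}^n (k_approx(s, s_i^O) − k(s, s_i^O)) c_i| ≤ dist(Φ(s), V) · (max_{1 ≤ i ≤ n} dist(Φ(s_i^O), V)) · Σ_{i=1}^n |c_i|; i.e. the prediction error is bounded by the power function at s, times the largest power function value over the observation locations, times the ℓ¹-norm of the coefficients. -/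

import Mathlib

open scoped RealInnerProductSpace

lemma infDist_eq_norm_sub_proj {H : Type*} [NormedAddCommGroup H] [InnerProductSpace ℝ H]
    (V : Submodule ℝ H) [CompleteSpace V] (x : H) :
    Metric.infDist x (V : Set H) = ‖x - (V.orthogonalProjectionOnto x : H)‖ := by
  rw [Metric.infDist_eq_iInf, ← Submodule.starProjection_apply, Submodule.starProjection_minimal]
  congr 1
  ext y
  rw [dist_eq_norm]

theorem rapid_prediction_assembled_error_bound
    {H : Type*} [NormedAddCommGroup H] [InnerProductSpace ℝ H]
    {d n N : ℕ} (hn : 0 < n)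
    (Φ : (Fin d → ℝ) → H)
    (k : (Fin d → ℝ) → (Fin d → ℝ) → ℝ)
    (hk : ∀ x y, k x y = ⟪Φ x, Φ y⟫)
    (sG : Fin N → (Fin d → ℝ))
    (V : Submodule ℝ H) (hV : V = Submodule.span ℝ (Set.range fun q => Φ (sG q)))
    [CompleteSpace V]
    (kapprox : (Fin d → ℝ) → (Fin d → ℝ) → ℝ)
    (hkapprox : ∀ x s, kapprox x s = ⟪Φ x, (V.orthogonalProjectionOnto (Φ s) : H)⟫)
    (s : Fin d → ℝ) (sO : Fin n → (Fin d → ℝ)) (c : Fin n → ℝ) :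
    (|(∑ i, kapprox s (sO i) * c i) - ∑ i, k s (sO i) * c i|
        = |∑ i, (kapprox s (sO i) - k s (sO i)) * c i|)
    ∧ |(∑ i, kapprox s (sO i) * c i) - ∑ i, k s (sO i) * c i|
        ≤ Metric.infDist (Φ s) (V : Set H)
          * (Finset.univ.sup' ⟨⟨0, hn⟩, Finset.mem_univ _⟩
              fun i => Metric.infDist (Φ (sO i)) (V : Set H))
          * ∑ i, |c i| := by
  have heq : (∑ i, kapprox s (sO i) * c i) - ∑ i, k s (sO i) * c i
      = ∑ i, (kapprox s (sO i) - k s (sO i)) * c i := by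
    rw [← Finset.sum_sub_distrib]
    congr 1; ext i; ring
  refine ⟨by rw [heq], ?_⟩
  set D := Metric.infDist (Φ s) (V : Set H) with hD
  set M := Finset.univ.sup' ⟨⟨0, hn⟩, Finset.mem_univ _⟩
      fun i => Metric.infDist (Φ (sO i)) (V : Set H) with hM
  have hterm : ∀ i, |kapprox s (sO i) - k s (sO i)| ≤ D * M := by
    intro i
    have hw : Φ (sO i) - (V.orthogonalProjectionOnto (Φ (sO i)) : H) ∈ Vᗮ :=
      Submodule.sub_starProjection_mem_orthogonal (K := V) _
    have h1 : kapprox s (sO i) - k s (sO i)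
        = -⟪Φ s - (V.orthogonalProjectionOnto (Φ s) : H),
            Φ (sO i) - (V.orthogonalProjectionOnto (Φ (sO i)) : H)⟫ := by
      rw [hkapprox, hk]
      have h2 : ⟪(V.orthogonalProjectionOnto (Φ s) : H),
          Φ (sO i) - (V.orthogonalProjectionOnto (Φ (sO i)) : H)⟫ = 0 :=
        (hw _ (V.orthogonalProjectionOnto (Φ s)).2)
      rw [inner_sub_left, inner_sub_right, inner_sub_right] at *
      linarith
    rw [h1, abs_neg]
    calc |⟪Φ s - (V.orthogonalProjectionOnto (Φ s) : H),
            Φ (sO i) - (V.orthogonalProjectionOnto (Φ (sO i)) : H)⟫|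
        ≤ ‖Φ s - (V.orthogonalProjectionOnto (Φ s) : H)‖
          * ‖Φ (sO i) - (V.orthogonalProjectionOnto (Φ (sO i)) : H)‖ := abs_real_inner_le_norm _ _
      _ ≤ D * M := by
          rw [hD, infDist_eq_norm_sub_proj]
          apply mul_le_mul_of_nonneg_left _ (norm_nonneg _)
          rw [← infDist_eq_norm_sub_proj]
          exact Finset.le_sup' (fun i => Metric.infDist (Φ (sO i)) (V : Set H)) (Finset.mem_univ i)
  have hDM : 0 ≤ D * M := by
    have : |kapprox s (sO ⟨0, hn⟩) - k s (sO ⟨0, hn⟩)| ≤ D * M := hterm _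
    exact le_trans (abs_nonneg _) this
  calc |(∑ i, kapprox s (sO i) * c i) - ∑ i, k s (sO i) * c i|
      = |∑ i, (kapprox s (sO i) - k s (sO i)) * c i| := by rw [heq]
    _ ≤ ∑ i, |(kapprox s (sO i) - k s (sO i)) * c i| := Finset.abs_sum_le_sum_abs _ _
    _ ≤ ∑ i, D * M * |c i| := by
        apply Finset.sum_le_sum
        intro i _
        rw [abs_mul]
        exact mul_le_mul_of_nonneg_right (hterm i) (abs_nonneg _)
    _ = D * M * ∑ i, |c i| := by rw [Finset.mul_sum]
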